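/- Let $(X,q)$ be a mobi space over a mobi algebra $A$. If $q(x,a,y)=q(y,a,x)$ then $q(x,a,y)=q(x,\text{½},y)$. -/
import Mathlib


structure MobiAlgebra (A : Type*) where
  p : A → A → A → A
  zero : A
  half : A
  one : A
  A1 : p one half zero = half
  A2 : ∀ a, p zero a one = a
  A3 : ∀ a b, p a b a = a
  A4 : ∀ a b, p a zero b = a
  A5 : ∀ a b, p a one b = b
  A6 : ∀ a b₁ b₂, p a half b₁ = p a half b₂ → b₁ = b₂
  A7 : ∀ a b c₁ c₂ c₃, p a (p c₁ c₂ c₃) b = p (p a c₁ b) c₂ (p a c₃ b)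
  A8 : ∀ a₁ a₂ b₁ b₂ c,
    p (p a₁ c b₁) half (p a₂ c b₂) = p (p a₁ half a₂) c (p b₁ half b₂)

structure MobiSpace {A : Type*} (M : MobiAlgebra A) (X : Type*) where
  q : X → A → X → X
  X1 : ∀ x y, q x M.zero y = x
  X2 : ∀ x y, q x M.one y = y
  X3 : ∀ x a, q x a x = x
  X4 : ∀ x y₁ y₂, q x M.half y₁ = q x M.half y₂ → y₁ = y₂
  X5 : ∀ x y a b c, q (q x a y) b (q x c y) = q x (M.p a b c) y

lemma mobi_bar_half {A : Type*} (M : MobiAlgebra A) (a : A) :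
    M.p a M.half (M.p M.one a M.zero) = M.half := by
  have h8 := M.A8 M.zero M.one M.one M.zero a
  rw [M.A2, M.A2, M.A1, M.A3] at h8
  exact h8

lemma q_swap {A X : Type*} (M : MobiAlgebra A) (S : MobiSpace M X)
    (x y : X) (a : A) : S.q x a y = S.q y (M.p M.one a M.zero) x := by
  have h5 := S.X5 y x M.one a M.zero
  rw [S.X2, S.X1] at h5
  exact h5

theorem q_sym_implies_half {A X : Type*} (M : MobiAlgebra A) (S : MobiSpace M X)
    (x y : X) (a : A) (h : S.q x a y = S.q y a x) :
    S.q x a y = S.q x M.half y := by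
  have hbar : S.q x a y = S.q x (M.p M.one a M.zero) y := by
    rw [h, q_swap M S y x a]
  calc S.q x a y = S.q (S.q x a y) M.half (S.q x a y) := (S.X3 _ _).symm
    _ = S.q (S.q x a y) M.half (S.q x (M.p M.one a M.zero) y) := by rw [← hbar]
    _ = S.q x (M.p a M.half (M.p M.one a M.zero)) y := S.X5 x y a M.half _
    _ = S.q x M.half y := by rw [mobi_bar_half]
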